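/- Let p be an odd prime and G a subgroup of GL_2(F_p) containing SL_2(F_p). If a cohomology class ξ in H^1(G, ad⁰(i)) restricts to zero on the cyclic subgroup generated by the transvection [[1,1],[0,1]], and p = 5 or p ≥ 7 with nonexceptional cohomology (so that H^1(SL_2(F_p), ad⁰) = 0 unless p = 5), then ξ = 0. In particular for G ⊇ SL_2(F_5) in GL_2(F_5), the subgroup generated by [[1,1],[0,1]] is a Sylow 5-subgroup of G. -/
import Mathlib


noncomputable section

/-- The transvection `[[1,1],[0,1]]` as an element of `SL₂(ℤ/p)`. -/
def transvSL (p : ℕ) : Matrix.SpecialLinearGroup (Fin 2) (ZMod p) :=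
  ⟨!![1, 1; 0, 1], by simp [Matrix.det_fin_two_of]⟩

/-- The transvection `[[1,1],[0,1]]` as an element of `GL₂(ℤ/p)`. -/
def transvGL (p : ℕ) : GL (Fin 2) (ZMod p) :=
  Matrix.SpecialLinearGroup.toGL (transvSL p)

/-- The action of `g ∈ GL₂(𝔽_p)` on `ad⁰(i)`: `A ↦ det(g)ⁱ · g A g⁻¹`. -/
def actAd0' (p : ℕ) (i : ℕ) (g : GL (Fin 2) (ZMod p)) (A : Matrix (Fin 2) (Fin 2) (ZMod p)) :
    Matrix (Fin 2) (Fin 2) (ZMod p) :=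
  ((g : Matrix (Fin 2) (Fin 2) (ZMod p)).det) ^ i •
    ((g : Matrix (Fin 2) (Fin 2) (ZMod p)) * A *
      ((g⁻¹ : GL (Fin 2) (ZMod p)) : Matrix (Fin 2) (Fin 2) (ZMod p)))

set_option maxHeartbeats 1000000
set_option synthInstance.maxHeartbeats 1000000

variable {p i : ℕ}

lemma act_one (A : Matrix (Fin 2) (Fin 2) (ZMod p)) : actAd0' p i 1 A = A := by
  simp [actAd0']

lemma act_mul (g h : GL (Fin 2) (ZMod p)) (A : Matrix (Fin 2) (Fin 2) (ZMod p)) :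
    actAd0' p i (g * h) A = actAd0' p i g (actAd0' p i h A) := by
  simp only [actAd0', Units.val_mul, mul_inv_rev, Matrix.det_mul, mul_pow,
    Matrix.smul_mul, Matrix.mul_smul, smul_smul]
  congr 1
  simp only [Matrix.mul_assoc]

lemma act_add (g : GL (Fin 2) (ZMod p)) (A B : Matrix (Fin 2) (Fin 2) (ZMod p)) :
    actAd0' p i g (A + B) = actAd0' p i g A + actAd0' p i g B := by
  simp [actAd0', Matrix.mul_add, Matrix.add_mul, smul_add]

lemma act_sub (g : GL (Fin 2) (ZMod p)) (A B : Matrix (Fin 2) (Fin 2) (ZMod p)) :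
    actAd0' p i g (A - B) = actAd0' p i g A - actAd0' p i g B := by
  simp [actAd0', Matrix.mul_sub, Matrix.sub_mul, smul_sub]

lemma act_smul (g : GL (Fin 2) (ZMod p)) (c : ZMod p) (A : Matrix (Fin 2) (Fin 2) (ZMod p)) :
    actAd0' p i g (c • A) = c • actAd0' p i g A := by
  simp only [actAd0', Matrix.mul_smul, Matrix.smul_mul, smul_smul, mul_comm]

lemma act_zero (g : GL (Fin 2) (ZMod p)) : actAd0' p i g 0 = 0 := by
  simp [actAd0']

lemma trace_act (g : GL (Fin 2) (ZMod p)) (A : Matrix (Fin 2) (Fin 2) (ZMod p)) :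
    (actAd0' p i g A).trace = ((g : Matrix (Fin 2) (Fin 2) (ZMod p)).det) ^ i * A.trace := by
  rw [actAd0', Matrix.trace_smul, Matrix.trace_mul_cycle, ← Units.val_mul, inv_mul_cancel,
    Units.val_one, Matrix.one_mul, smul_eq_mul]

lemma transvGL_val : ((transvGL p : GL (Fin 2) (ZMod p)) : Matrix (Fin 2) (Fin 2) (ZMod p))
    = !![1, 1; 0, 1] := rfl

lemma transvGL_pow_val (n : ℕ) :
    (((transvGL p) ^ n : GL (Fin 2) (ZMod p)) : Matrix (Fin 2) (Fin 2) (ZMod p))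
      = !![1, (n : ZMod p); 0, 1] := by
  induction n with
  | zero => simp [Matrix.one_fin_two]
  | succ n ih =>
      rw [pow_succ, Units.val_mul, ih, transvGL_val]
      push_cast
      simp [Matrix.mul_fin_two]
      ring_nf

lemma orderOf_transvGL (hp : p.Prime) : orderOf (transvGL p) = p := by
  haveI : Fact p.Prime := ⟨hp⟩
  refine orderOf_eq_prime ?_ ?_
  · ext : 1
    rw [transvGL_pow_val]
    simp [Matrix.one_fin_two]
  · intro h
    have := congrArg (fun u : GL (Fin 2) (ZMod p) =>
      (u : Matrix (Fin 2) (Fin 2) (ZMod p)) 0 1) h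
    simp [transvGL_val, Matrix.one_fin_two] at this

/-- Cardinality of `GL₂(𝔽_p)`. -/
lemma card_GL2 (hp : p.Prime) :
    Nat.card (GL (Fin 2) (ZMod p)) = (p ^ 2 - 1) * (p ^ 2 - p) := by
  haveI : Fact p.Prime := ⟨hp⟩
  rw [Matrix.card_GL_field, Fin.prod_univ_two]
  simp [ZMod.card]

/-- `p` does not divide the index of a subgroup of order `p` in a subgroup of `GL₂(𝔽_p)`. -/
lemma key_index (hp : p.Prime) (G : Subgroup (GL (Fin 2) (ZMod p)))
    (P : Subgroup G) (hP : Nat.card P = p) : ¬ p ∣ P.index := by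
  haveI : Fact p.Prime := ⟨hp⟩
  intro hdvd
  have h1 : Nat.card P * P.index = Nat.card G := Subgroup.card_mul_index P
  have h2 : Nat.card G ∣ Nat.card (GL (Fin 2) (ZMod p)) := Subgroup.card_subgroup_dvd_card G
  rw [card_GL2 hp] at h2
  have h3 : (p ^ 2 - 1) * (p ^ 2 - p) = p * ((p ^ 2 - 1) * (p - 1)) := by
    have : p ^ 2 - p = p * (p - 1) := by
      rw [Nat.mul_sub, mul_one, pow_two]
    rw [this]; ring
  rw [h3] at h2
  obtain ⟨k, hk⟩ := hdvd
  rw [hP, hk] at h1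
  have h4 : p * (p * k) ∣ p * ((p ^ 2 - 1) * (p - 1)) := by rw [← mul_assoc] at h1 ⊢; rw [h1]; exact h2
  have h5 : p * k ∣ (p ^ 2 - 1) * (p - 1) := (mul_dvd_mul_iff_left hp.pos.ne').mp h4
  have h6 : p ∣ (p ^ 2 - 1) * (p - 1) := dvd_trans (Dvd.intro k rfl) h5
  rcases hp.dvd_mul.mp h6 with h | h
  · have : p ∣ p ^ 2 := Dvd.intro p (by ring)
    have hq : 1 ≤ p ^ 2 := Nat.one_le_pow _ _ hp.pos
    have h7 := Nat.dvd_sub this h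
    rw [Nat.sub_sub_self hq] at h7
    exact hp.one_lt.ne' (Nat.dvd_one.mp h7)
  · have h2 := hp.two_le
    have := Nat.le_of_dvd (by omega) h
    omega

/-- Abstract transfer/averaging lemma: a 1-cocycle vanishing on a subgroup of index
invertible in the scalar field is a coboundary. -/
lemma transfer_abstract {Γ : Type*} [Group Γ] [Finite Γ] {F : Type*} [Field F]
    {M : Type*} [AddCommGroup M] [Module F M]
    (act : Γ → M → M)
    (hact_add : ∀ g a b, act g (a + b) = act g a + act g b)
    (hact_smul : ∀ g (c : F) a, act g (c • a) = c • act g a)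
    (P : Subgroup Γ) (hind : (P.index : F) ≠ 0)
    (ξ : Γ → M)
    (hcoc : ∀ γ δ, ξ (γ * δ) = ξ γ + act γ (ξ δ))
    (hvan : ∀ t ∈ P, ξ t = 0) :
    ∃ m : M, (∀ φ : M →ₗ[F] F, (∀ γ, φ (ξ γ) = 0) → φ m = 0) ∧
      ∀ γ, ξ γ = act γ m - m := by
  haveI : Fintype (Γ ⧸ P) := Fintype.ofFinite _
  have hact_zero : ∀ g, act g 0 = 0 := by
    intro g
    have := hact_add g 0 0
    simpa using this.symm
  have hact_sub : ∀ g a b, act g (a - b) = act g a - act g b := by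
    intro g a b
    have := hact_add g (a - b) b
    rw [sub_add_cancel] at this
    rw [this]; abel
  have hrc : ∀ (γ : Γ), ∀ t ∈ P, ξ (γ * t) = ξ γ := by
    intro γ t ht
    rw [hcoc, hvan t ht, hact_zero, add_zero]
  have key : ∀ (γ : Γ) (q : Γ ⧸ P),
      ξ (γ • q).out = ξ γ + act γ (ξ q.out) := by
    intro γ q
    have h1 : (QuotientGroup.mk (γ * q.out) : Γ ⧸ P) = QuotientGroup.mk (γ • q).out := by
      rw [QuotientGroup.out_eq']
      calc (QuotientGroup.mk (γ * q.out) : Γ ⧸ P)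
          = γ • (QuotientGroup.mk q.out : Γ ⧸ P) := by
            rw [← smul_eq_mul, MulAction.Quotient.smul_mk]
        _ = γ • q := by rw [QuotientGroup.out_eq']
    have hmem : (γ * q.out)⁻¹ * (γ • q).out ∈ P := QuotientGroup.eq.mp h1
    have h2 : (γ • q).out = (γ * q.out) * ((γ * q.out)⁻¹ * (γ • q).out) := by
      rw [mul_inv_cancel_left]
    rw [h2, hrc _ _ hmem, hcoc]
  set S : M := ∑ q : Γ ⧸ P, ξ q.out with hS
  have hmain : ∀ γ : Γ, (P.index : F) • ξ γ = S - act γ S := by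
    intro γ
    have e1 : ∑ q : Γ ⧸ P, ξ (γ • q).out = S :=
      Function.Bijective.sum_comp (MulAction.bijective γ) (fun q : Γ ⧸ P => ξ q.out)
    have esum : act γ (∑ q : Γ ⧸ P, ξ q.out) = ∑ q : Γ ⧸ P, act γ (ξ q.out) :=
      map_sum (AddMonoidHom.mk' (act γ) (hact_add γ)) (fun q : Γ ⧸ P => ξ q.out)
        Finset.univ
    have e2 : ∑ q : Γ ⧸ P, ξ (γ • q).out
        = Fintype.card (Γ ⧸ P) • ξ γ + act γ S := by
      rw [Finset.sum_congr rfl (fun q _ => key γ q), Finset.sum_add_distrib,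
        Finset.sum_const, Finset.card_univ, hS, esum]
    have e3 : Fintype.card (Γ ⧸ P) = P.index := by
      rw [Subgroup.index_eq_card, Nat.card_eq_fintype_card]
    rw [Nat.cast_smul_eq_nsmul, ← e3, eq_sub_iff_add_eq]
    exact (e1.symm.trans e2).symm
  refine ⟨-((P.index : F)⁻¹ • S), ?_, ?_⟩
  · intro φ hφ
    have : φ S = 0 := by
      rw [hS, map_sum]
      exact Finset.sum_eq_zero fun q _ => hφ _
    simp [this]
  · intro γ
    have h := hmain γ
    have hstep : ξ γ = (P.index : F)⁻¹ • ((P.index : F) • ξ γ) := by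
      rw [smul_smul, inv_mul_cancel₀ hind, one_smul]
    have hact_neg : ∀ a, act γ (-a) = - act γ a := by
      intro a
      have h0 := hact_add γ (-a) a
      rw [neg_add_cancel, hact_zero] at h0
      exact eq_neg_of_add_eq_zero_left h0.symm
    rw [hstep, h, smul_sub, hact_neg, hact_smul]
    abel

/-- let `p` be an odd prime, `G ≤ GL₂(𝔽_p)` containing `SL₂(𝔽_p)`, and
`ξ` a 1-cocycle on `G` valued in `ad⁰(i)` restricting to a coboundary on the cyclic
subgroup generated by the transvection; assume `p = 5`, or `p ≥ 7` together with the
vanishing `H¹(SL₂(𝔽_p), ad⁰) = 0`.  Then `ξ` is a coboundary.  In particular, for any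
`G' ⊇ SL₂(𝔽₅)` in `GL₂(𝔽₅)`, the subgroup generated by `[[1,1],[0,1]]` is a Sylow
5-subgroup of `G'`. -/
theorem cocycle_trivial_of_trivial_on_transvection
    (p : ℕ) (hp : p.Prime) (hodd : p ≠ 2) (i : ℕ)
    (G : Subgroup (GL (Fin 2) (ZMod p)))
    (hSL : (Matrix.SpecialLinearGroup.toGL (n := Fin 2) (R := ZMod p)).range ≤ G)
    (ξ : GL (Fin 2) (ZMod p) → Matrix (Fin 2) (Fin 2) (ZMod p))
    (htr : ∀ g ∈ G, (ξ g).trace = 0)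
    (hcoc : ∀ g ∈ G, ∀ h ∈ G, ξ (g * h) = ξ g + actAd0' p i g (ξ h))
    (hres : ∃ m : Matrix (Fin 2) (Fin 2) (ZMod p), m.trace = 0 ∧
      ∀ g ∈ Subgroup.zpowers (transvGL p), ξ g = actAd0' p i g m - m)
    (hcase : p = 5 ∨ (7 ≤ p ∧
      ∀ η : Matrix.SpecialLinearGroup (Fin 2) (ZMod p) → Matrix (Fin 2) (Fin 2) (ZMod p),
        (∀ g, (η g).trace = 0) →
        (∀ g h, η (g * h) = η g + (g : Matrix (Fin 2) (Fin 2) (ZMod p)) * η h *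
          ((g⁻¹ : Matrix.SpecialLinearGroup (Fin 2) (ZMod p)) :
            Matrix (Fin 2) (Fin 2) (ZMod p))) →
        ∃ m : Matrix (Fin 2) (Fin 2) (ZMod p), m.trace = 0 ∧
          ∀ g, η g = (g : Matrix (Fin 2) (Fin 2) (ZMod p)) * m *
            ((g⁻¹ : Matrix.SpecialLinearGroup (Fin 2) (ZMod p)) :
              Matrix (Fin 2) (Fin 2) (ZMod p)) - m)) :
    (∃ m : Matrix (Fin 2) (Fin 2) (ZMod p), m.trace = 0 ∧
        ∀ g ∈ G, ξ g = actAd0' p i g m - m) ∧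
      ∀ G' : Subgroup (GL (Fin 2) (ZMod 5)),
        (Matrix.SpecialLinearGroup.toGL (n := Fin 2) (R := ZMod 5)).range ≤ G' →
        ∃ P : Sylow 5 G',
          (P : Subgroup G') = (Subgroup.zpowers (transvGL 5)).subgroupOf G' := by
  haveI : Fact p.Prime := ⟨hp⟩
  constructor
  · -- Part 1: the cocycle is a coboundary on all of `G`.
    obtain ⟨m₀, hm₀tr, hm₀⟩ := hres
    set ξ₁ : GL (Fin 2) (ZMod p) → Matrix (Fin 2) (Fin 2) (ZMod p) :=
      fun g => ξ g - (actAd0' p i g m₀ - m₀) with hξ₁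
    have hT : transvGL p ∈ G := hSL ⟨transvSL p, rfl⟩
    set T : G := ⟨transvGL p, hT⟩ with hTdef
    set P : Subgroup G := Subgroup.zpowers T with hPdef
    have horder : orderOf T = p := by
      have h1 : orderOf (G.subtype T) = orderOf T :=
        orderOf_injective G.subtype G.subtype_injective T
      rw [← h1]
      exact orderOf_transvGL hp
    have hcardP : Nat.card P = p := by rw [hPdef, Nat.card_zpowers, horder]
    have hind : ((P.index : ZMod p)) ≠ 0 := by
      rw [Ne, ZMod.natCast_eq_zero_iff]
      exact key_index hp G P hcardP
    have hcoc1 : ∀ g ∈ G, ∀ h ∈ G, ξ₁ (g * h) = ξ₁ g + actAd0' p i g (ξ₁ h) := by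
      intro g hg h hh
      simp only [hξ₁]
      rw [hcoc g hg h hh, act_mul, act_sub, act_sub]
      abel
    have htr1 : ∀ g ∈ G, (ξ₁ g).trace = 0 := by
      intro g hg
      simp only [hξ₁]
      rw [Matrix.trace_sub, Matrix.trace_sub, trace_act, hm₀tr, htr g hg]
      ring
    have hvan : ∀ t : G, t ∈ P → ξ₁ ↑t = 0 := by
      intro t ht
      rw [hPdef, Subgroup.mem_zpowers_iff] at ht
      obtain ⟨k, hk⟩ := ht
      have hmem : (t : GL (Fin 2) (ZMod p)) ∈ Subgroup.zpowers (transvGL p) := by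
        rw [Subgroup.mem_zpowers_iff]
        exact ⟨k, by rw [← hk, SubgroupClass.coe_zpow]⟩
      simp only [hξ₁]
      rw [hm₀ _ hmem, sub_self]
    haveI : Finite (GL (Fin 2) (ZMod p)) := inferInstance
    obtain ⟨m₁, hφ, hcb⟩ := transfer_abstract (Γ := ↥G) (F := ZMod p)
      (M := Matrix (Fin 2) (Fin 2) (ZMod p))
      (fun γ : G => actAd0' p i ↑γ)
      (by intro γ a b; exact act_add _ a b) (by intro γ c a; exact act_smul _ c a)
      P hind (fun γ : G => ξ₁ ↑γ) (by intro γ δ; exact hcoc1 ↑γ γ.2 ↑δ δ.2) hvan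
    have hm₁tr : m₁.trace = 0 :=
      hφ (Matrix.traceLinearMap (Fin 2) (ZMod p) (ZMod p)) (fun γ => htr1 ↑γ γ.2)
    refine ⟨m₀ + m₁, by rw [Matrix.trace_add, hm₀tr, hm₁tr, add_zero], ?_⟩
    intro g hg
    have h2 : ξ₁ g = actAd0' p i g m₁ - m₁ := hcb ⟨g, hg⟩
    have h3 : ξ g = ξ₁ g + (actAd0' p i g m₀ - m₀) := by simp [hξ₁]
    rw [h3, h2, act_add]
    abel
  · -- Part 2: the Sylow 5-subgroup statement.
    intro G' hSL'
    haveI : Fact (Nat.Prime 5) := ⟨by norm_num⟩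
    have hT5 : transvGL 5 ∈ G' := hSL' ⟨transvSL 5, rfl⟩
    set T5 : G' := ⟨transvGL 5, hT5⟩ with hT5def
    set H : Subgroup G' := Subgroup.zpowers T5 with hHdef
    have horder5 : orderOf T5 = 5 := by
      have h1 : orderOf (G'.subtype T5) = orderOf T5 :=
        orderOf_injective G'.subtype G'.subtype_injective T5
      rw [← h1]
      exact orderOf_transvGL (by norm_num)
    have hcardH : Nat.card H = 5 := by rw [hHdef, Nat.card_zpowers, horder5]
    have hpg : IsPGroup 5 H := IsPGroup.of_card (n := 1) (by rw [hcardH, pow_one])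
    obtain ⟨Q, hQ⟩ := hpg.exists_le_sylow
    refine ⟨Q, ?_⟩
    obtain ⟨k, hk⟩ := IsPGroup.exists_card_eq Q.isPGroup'
    have hdvd : Nat.card (Q : Subgroup G') ∣ Nat.card (GL (Fin 2) (ZMod 5)) :=
      dvd_trans (Subgroup.card_subgroup_dvd_card (Q : Subgroup G'))
        (Subgroup.card_subgroup_dvd_card G')
    rw [card_GL2 (by norm_num), hk] at hdvd
    have hk1 : k ≤ 1 := by
      by_contra hc
      push_neg at hc
      have h25 : (5 : ℕ) ^ 2 ∣ 5 ^ k := pow_dvd_pow 5 hc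
      have := h25.trans hdvd
      norm_num at this
    have hcardQ : Nat.card (Q : Subgroup G') ≤ 5 := by
      rw [hk]
      calc (5:ℕ) ^ k ≤ 5 ^ 1 := Nat.pow_le_pow_right (by norm_num) hk1
        _ = 5 := pow_one 5
    have heq : H = (Q : Subgroup G') :=
      Subgroup.eq_of_le_of_card_ge hQ (by rw [hcardH]; exact hcardQ)
    rw [← heq, hHdef]
    ext x
    rw [Subgroup.mem_subgroupOf, Subgroup.mem_zpowers_iff, Subgroup.mem_zpowers_iff]
    constructor
    · rintro ⟨k, hk⟩
      exact ⟨k, by rw [← hk, SubgroupClass.coe_zpow]⟩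
    · rintro ⟨k, hk⟩
      refine ⟨k, Subtype.ext ?_⟩
      rw [SubgroupClass.coe_zpow]
      exact hk

end
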